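/- arXiv:1801.04612 — 4 statements merged into one kernel-verified Lean document; each statement's English description precedes it below -/
import Mathlib

section
/- For a real polynomial Δ all of whose zeros are real and simple, if Δ'(λ) = 0 at a real point λ, then Δ(λ)·Δ''(λ) < 0, provided Δ has degree at least 1 and Δ(λ) ≠ 0. -/
open Polynomial Finset

private lemma my_derivative_prod {R ι : Type*} [CommSemiring R] [DecidableEq ι]
    (s : Finset ι) (f : ι → Polynomial R) :
    derivative (∏ i ∈ s, f i) = ∑ i ∈ s, (∏ j ∈ s.erase i, f j) * derivative (f i) := by
  classical
  induction s using Finset.induction with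
  | empty => simp
  | @insert a s ha ih =>
    rw [Finset.prod_insert ha, derivative_mul, ih, Finset.sum_insert ha,
      Finset.erase_insert ha, Finset.mul_sum]
    congr 1
    · exact mul_comm _ _
    · refine Finset.sum_congr rfl fun i hi => ?_
      have hia : i ≠ a := fun h => ha (h ▸ hi)
      rw [Finset.erase_insert_of_ne hia.symm,
        Finset.prod_insert (fun h => ha (Finset.mem_of_mem_erase h))]
      ring

/-- For a real polynomial `Δ` of degree at least 1, all of whose complex roots
are real and which is squarefree (all zeros simple), if `Δ'(λ) = 0` at a real
point `λ` with `Δ(λ) ≠ 0`, then `Δ(λ) · Δ''(λ) < 0`. -/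
theorem stmt_3 (Δ : Polynomial ℝ) (hdeg : 1 ≤ Δ.degree)
    (hsf : Squarefree Δ)
    (hreal : ∀ z ∈ (Δ.map (algebraMap ℝ ℂ)).roots, z.im = 0)
    (lam : ℝ) (hder : (derivative Δ).eval lam = 0) (hne : Δ.eval lam ≠ 0) :
    Δ.eval lam * (derivative (derivative Δ)).eval lam < 0 := by
  have hΔ0 : Δ ≠ 0 := hsf.ne_zero
  set f := algebraMap ℝ ℂ with hf
  have hinj : Function.Injective f := (algebraMap ℝ ℂ).injective
  have hsep : Δ.Separable := PerfectField.separable_iff_squarefree.mpr hsf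
  have hnodup : Δ.roots.Nodup := nodup_roots hsep
  have hnodupC : (Δ.map f).roots.Nodup := nodup_roots hsep.map
  have hmap0 : Δ.map f ≠ 0 := (Polynomial.map_ne_zero_iff hinj).mpr hΔ0
  have hcardC : Multiset.card (Δ.map f).roots = Δ.natDegree :=
    (natDegree_map (R := ℝ) f ▸ (IsAlgClosed.splits (Δ.map f)).natDegree_eq_card_roots).symm
  have hsub : (Δ.map f).roots ≤ Δ.roots.map f := by
    rw [Multiset.le_iff_subset hnodupC]
    intro z hz
    have him : z.im = 0 := hreal z hz
    have hz0 : (Δ.map f).eval z = 0 := (mem_roots hmap0).mp hz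
    have hzre : z = f z.re := by
      apply Complex.ext <;> simp [hf, him]
    rw [Multiset.mem_map]
    refine ⟨z.re, ?_, hzre.symm⟩
    rw [mem_roots hΔ0]
    have heq : (Δ.map f).eval (f z.re) = f (Δ.eval z.re) := by
      rw [eval_map, eval₂_at_apply]
    rw [hzre, heq] at hz0
    exact hinj (by simpa using hz0)
  have hcard : Multiset.card Δ.roots = Δ.natDegree := by
    have h1 : Δ.natDegree ≤ Multiset.card Δ.roots := by
      have := Multiset.card_le_card hsub
      simpa [hcardC] using this
    exact le_antisymm (card_roots' Δ) h1
  have hsplit : Δ.Splits := splits_iff_card_roots.mpr hcard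
  set s : Finset ℝ := Δ.roots.toFinset with hs
  have hsval : s.val = Δ.roots := Multiset.toFinset_val Δ.roots ▸ Multiset.dedup_eq_self.mpr hnodup
  set c := Δ.leadingCoeff with hc
  have hc0 : c ≠ 0 := leadingCoeff_ne_zero.mpr hΔ0
  have hprod : Δ = C c * ∏ r ∈ s, (X - C r) := by
    conv_lhs => rw [(C_leadingCoeff_mul_prod_multiset_X_sub_C hcard).symm]
    congr 1
    rw [Finset.prod_eq_multiset_prod, hsval]
  set q : ℝ → ℝ := fun r => lam - r with hq
  have hq0 : ∀ r ∈ s, q r ≠ 0 := by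
    intro r hr h0
    have hrr : r ∈ Δ.roots := Multiset.mem_toFinset.mp hr
    have hlam : lam = r := by
      have : lam - r = 0 := h0
      linarith
    exact hne (hlam ▸ (mem_roots hΔ0).mp hrr)
  set E := Δ.eval lam with hE
  have hEval : E = c * ∏ r ∈ s, q r := by
    rw [hE, hprod]; simp [eval_prod, hq]
  have hder1 : derivative Δ = C c * ∑ r ∈ s, ∏ t ∈ s.erase r, (X - C t) := by
    rw [hprod, derivative_C_mul, my_derivative_prod]
    simp
  have hErase : ∀ r ∈ s, (∏ t ∈ s.erase r, q t) = (∏ t ∈ s, q t) * (q r)⁻¹ := by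
    intro r hr
    rw [eq_mul_inv_iff_mul_eq₀ (hq0 r hr)]
    exact Finset.prod_erase_mul s q hr
  have hEval1 : (derivative Δ).eval lam = E * ∑ r ∈ s, (q r)⁻¹ := by
    rw [hder1]
    simp only [eval_mul, eval_C, eval_finset_sum, eval_prod, eval_sub, eval_X]
    rw [Finset.mul_sum, hEval, Finset.mul_sum]
    refine Finset.sum_congr rfl fun r hr => ?_
    rw [hErase r hr]; ring
  have hS : ∑ r ∈ s, (q r)⁻¹ = 0 := by
    have := hder
    rw [hEval1] at this
    exact (mul_eq_zero.mp this).resolve_left hne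
  have hder2 : derivative (derivative Δ) =
      C c * ∑ r ∈ s, ∑ t ∈ s.erase r, ∏ u ∈ (s.erase r).erase t, (X - C u) := by
    rw [hder1, derivative_C_mul, derivative_sum]
    congr 1
    refine Finset.sum_congr rfl fun r _ => ?_
    rw [my_derivative_prod]
    simp
  have hEval2 : (derivative (derivative Δ)).eval lam =
      E * ∑ r ∈ s, ∑ t ∈ s.erase r, (q r)⁻¹ * (q t)⁻¹ := by
    rw [hder2]
    simp only [eval_mul, eval_C, eval_finset_sum, eval_prod, eval_sub, eval_X]
    rw [Finset.mul_sum, hEval, Finset.mul_sum]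
    refine Finset.sum_congr rfl fun r hr => ?_
    rw [Finset.mul_sum, Finset.mul_sum]
    refine Finset.sum_congr rfl fun t ht => ?_
    have hts : t ∈ s := Finset.mem_of_mem_erase ht
    have h1 : (∏ u ∈ (s.erase r).erase t, q u) * q t = ∏ u ∈ s.erase r, q u :=
      Finset.prod_erase_mul _ q ht
    have h3 : (∏ u ∈ (s.erase r).erase t, q u) = (∏ u ∈ s.erase r, q u) * (q t)⁻¹ := by
      rw [eq_mul_inv_iff_mul_eq₀ (hq0 t hts)]; exact h1
    rw [h3, hErase r hr]; ring
  have hsne : s.Nonempty := by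
    rw [← Finset.card_pos, Finset.card_def, hsval, hcard]
    exact natDegree_pos_iff_degree_pos.mpr (lt_of_lt_of_le (by norm_num) hdeg)
  have hD : (∑ r ∈ s, ∑ t ∈ s.erase r, (q r)⁻¹ * (q t)⁻¹) = - ∑ r ∈ s, ((q r)⁻¹)^2 := by
    have hsq : (∑ r ∈ s, (q r)⁻¹) * (∑ t ∈ s, (q t)⁻¹) =
        ∑ r ∈ s, (((q r)⁻¹)^2 + ∑ t ∈ s.erase r, (q r)⁻¹ * (q t)⁻¹) := by
      rw [Finset.sum_mul_sum]
      refine Finset.sum_congr rfl fun r hr => ?_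
      rw [← Finset.add_sum_erase s (fun t => (q r)⁻¹ * (q t)⁻¹) hr]
      ring_nf
    rw [hS, zero_mul, Finset.sum_add_distrib] at hsq
    linarith [hsq]
  have hDneg : (∑ r ∈ s, ∑ t ∈ s.erase r, (q r)⁻¹ * (q t)⁻¹) < 0 := by
    rw [hD, neg_lt_zero]
    refine Finset.sum_pos (fun r hr => ?_) hsne
    have : (q r)⁻¹ ≠ 0 := inv_ne_zero (hq0 r hr)
    positivity
  rw [hEval2]
  have hE2 : 0 < E ^ 2 := by positivity
  calc E * (E * ∑ r ∈ s, ∑ t ∈ s.erase r, (q r)⁻¹ * (q t)⁻¹)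
      = E ^ 2 * ∑ r ∈ s, ∑ t ∈ s.erase r, (q r)⁻¹ * (q t)⁻¹ := by ring
    _ < 0 := mul_neg_of_pos_of_neg hE2 hDneg
end

section
/- Let Δ be a real polynomial with Δ(0) = cosh(ℓ/2) > 1 for some ℓ > 0, all of whose zeros are real and simple, and such that Δ'(λ) = 0 implies |Δ(λ)| ≥ 1. Then every real zero of the polynomial Δ² - 1 has multiplicity at most 2. -/
open Polynomial

/-- Let `Δ` be a real polynomial with `Δ(0) = cosh(ℓ/2)` for some `ℓ > 0`, all
of whose complex roots are real and simple, and such that `Δ'(λ) = 0` implies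
`|Δ(λ)| ≥ 1`.  Then every real zero of `Δ² - 1` has multiplicity at most 2. -/
theorem stmt_9 (ℓ : ℝ) (hℓ : 0 < ℓ) (Δ : Polynomial ℝ)
    (h0 : Δ.eval 0 = Real.cosh (ℓ / 2))
    (hsf : Squarefree Δ)
    (hreal : ∀ z ∈ (Δ.map (algebraMap ℝ ℂ)).roots, z.im = 0)
    (hcrit : ∀ lam : ℝ, (derivative Δ).eval lam = 0 → 1 ≤ |Δ.eval lam|) :
    ∀ x : ℝ, (Δ ^ 2 - 1).rootMultiplicity x ≤ 2 := by
  classical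
  intro x
  by_contra hx
  push_neg at hx
  have h3 : 3 ≤ (Δ ^ 2 - 1).rootMultiplicity x := hx
  have hcosh : 1 < Real.cosh (ℓ / 2) :=
    Real.one_lt_cosh.mpr (ne_of_gt (half_pos hℓ))
  have hP0 : (Δ ^ 2 - 1).eval 0 ≠ 0 := by
    simp only [eval_sub, eval_pow, eval_one, h0]
    nlinarith
  have hPne : (Δ ^ 2 - 1) ≠ 0 := fun h => hP0 (by simp [h])
  have hdvd : (X - C x) ^ 3 ∣ Δ ^ 2 - 1 :=
    (pow_dvd_pow _ h3).trans ((Δ ^ 2 - 1).pow_rootMultiplicity_dvd x)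
  have hxroot : (Δ ^ 2 - 1).eval x = 0 :=
    (rootMultiplicity_pos hPne).mp (by omega)
  have hΔx : Δ.eval x ≠ 0 := by
    intro h
    simp only [eval_sub, eval_pow, eval_one, h] at hxroot
    norm_num at hxroot
  -- degree bound
  have hdeg3 : 3 ≤ (Δ ^ 2 - 1).natDegree := by
    have h1 : ((X - C x) ^ 3 : Polynomial ℝ).natDegree = 3 := by
      simp [natDegree_pow]
    have h2 := natDegree_le_of_dvd hdvd hPne
    omega
  have hn : 2 ≤ Δ.natDegree := by
    by_contra h
    push_neg at h
    have h1 : (Δ ^ 2 - 1).natDegree ≤ 2 := by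
      refine (natDegree_sub_le _ _).trans ?_
      simp only [natDegree_pow, natDegree_one]
      omega
    omega
  have hΔ0 : Δ ≠ 0 := fun h => by simp [h] at hn
  have hΔ' : derivative Δ ≠ 0 := by
    intro h
    have := natDegree_eq_zero_of_derivative_eq_zero h
    omega
  -- derivative has double root at x
  have h2 : 2 ≤ (derivative (Δ ^ 2 - 1)).rootMultiplicity x := by
    have := (Δ ^ 2 - 1).rootMultiplicity_sub_one_le_derivative_rootMultiplicity x
    omega
  have hdP : derivative (Δ ^ 2 - 1) = (C 2 * Δ) * derivative Δ := by
    rw [derivative_sub, derivative_one, derivative_sq, sub_zero]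
  have hrm : 2 ≤ (derivative Δ).rootMultiplicity x := by
    rw [hdP, rootMultiplicity_mul (mul_ne_zero (mul_ne_zero (by norm_num) hΔ0) hΔ')] at h2
    have e1 : (C (2:ℝ) * Δ).rootMultiplicity x = 0 := by
      refine rootMultiplicity_eq_zero ?_
      simp only [IsRoot, eval_mul, eval_C]
      intro h
      apply hΔx
      nlinarith
    omega
  -- counting real roots of Δ
  have hmapne : Δ.map (algebraMap ℝ ℂ) ≠ 0 :=
    (Polynomial.map_ne_zero_iff (algebraMap ℝ ℂ).injective).mpr hΔ0
  have hccard : Multiset.card ((Δ.map (algebraMap ℝ ℂ)).roots) = Δ.natDegree :=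
    IsAlgClosed.card_roots_map_eq_natDegree_of_injective Δ (algebraMap ℝ ℂ).injective
  have hle : (Δ.map (algebraMap ℝ ℂ)).roots ≤ Δ.roots.map (algebraMap ℝ ℂ) := by
    rw [Multiset.le_iff_count]
    intro z
    by_cases hz : z ∈ (Δ.map (algebraMap ℝ ℂ)).roots
    · have him := hreal z hz
      have hz' : z = algebraMap ℝ ℂ z.re := by
        apply Complex.ext <;> simp [him]
      rw [count_roots, hz', Multiset.count_map_eq_count' _ _ (algebraMap ℝ ℂ).injective,
        count_roots, eq_rootMultiplicity_map (algebraMap ℝ ℂ).injective]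
    · rw [Multiset.count_eq_zero_of_notMem hz]
      omega
  have hrcard : Multiset.card Δ.roots = Δ.natDegree := by
    have h1 := Δ.card_roots' 
    have h2 : Δ.natDegree ≤ Multiset.card Δ.roots := by
      have := Multiset.card_le_card hle
      rw [Multiset.card_map, hccard] at this
      exact this
    omega
  have hnodup : Δ.roots.Nodup :=
    nodup_roots (PerfectField.separable_iff_squarefree.mpr hsf)
  have hfin : Δ.roots.toFinset.card = Δ.natDegree := by
    rw [Multiset.toFinset_card_of_nodup hnodup, hrcard]
  have hd1 := Δ.card_roots_toFinset_le_derivative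
  rw [hfin] at hd1
  have hcount : 2 ≤ (derivative Δ).roots.count x := by
    rw [count_roots]; exact hrm
  have key : (derivative Δ).roots.toFinset.card + 1 ≤ Multiset.card (derivative Δ).roots := by
    have hdedup : (derivative Δ).roots.dedup + {x} ≤ (derivative Δ).roots := by
      rw [Multiset.le_iff_count]
      intro y
      by_cases hy : y = x
      · have hxmem : x ∈ (derivative Δ).roots := Multiset.count_pos.mp (by omega)
        rw [hy, Multiset.count_add, Multiset.count_dedup, Multiset.count_singleton,
          if_pos rfl, if_pos hxmem]
        omega
      · rw [Multiset.count_add, Multiset.count_dedup, Multiset.count_singleton, if_neg hy]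
        split
        · next hmem => have := Multiset.count_pos.mpr hmem; omega
        · omega
    have := Multiset.card_le_card hdedup
    rw [Multiset.card_add, Multiset.card_singleton] at this
    have hde : (derivative Δ).roots.toFinset.card = Multiset.card (derivative Δ).roots.dedup := by
      rfl
    omega
  have hdeg' : Multiset.card (derivative Δ).roots ≤ Δ.natDegree - 1 :=
    ((derivative Δ).card_roots').trans (natDegree_derivative_le Δ)
  omega
end

section
/- Let Δ be a real polynomial with Δ(0) > 1. Then 0 is not a root of Δ² - 1, and the number of positive roots of Δ² - 1 (counted with multiplicity) is even, as is the number of negative roots, provided all roots of Δ² - 1 are real. -/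
open Polynomial

lemma aux_neg_prod (s : Multiset ℝ) : (∀ x ∈ s, x < 0) →
    (0 < s.prod ↔ Even (Multiset.card s)) := by
  induction s using Multiset.induction_on with
  | empty => simp
  | cons a s ih =>
    intro h
    have ha : a < 0 := h a (Multiset.mem_cons_self a s)
    have hs := ih (fun x hx => h x (Multiset.mem_cons_of_mem hx))
    have hne : s.prod ≠ 0 := Multiset.prod_ne_zero (fun h0 =>
      absurd (h 0 (Multiset.mem_cons_of_mem h0)) (lt_irrefl 0))
    simp only [Multiset.prod_cons, Multiset.card_cons, Nat.even_add_one]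
    rcases lt_or_gt_of_ne hne with hlt | hgt
    · have hpos : 0 < a * s.prod := mul_pos_of_neg_of_neg ha hlt
      have : ¬ Even (Multiset.card s) := fun hev =>
        absurd (hs.mpr hev) (not_lt.mpr hlt.le)
      exact iff_of_true hpos this
    · have hneg : a * s.prod < 0 := mul_neg_of_neg_of_pos ha hgt
      exact iff_of_false (not_lt.mpr hneg.le) (not_not.mpr (hs.mp hgt))

/-- Let `Δ` be a nonconstant real polynomial with `Δ(0) > 1` such that all
complex roots of `Δ² - 1` are real.  Then `0` is not a root of `Δ² - 1`, and
the number of positive roots of `Δ² - 1` (with multiplicity) is even, as is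
the number of negative roots. -/
theorem stmt_10 (Δ : Polynomial ℝ) (hdeg : 1 ≤ Δ.degree)
    (h0 : 1 < Δ.eval 0)
    (hreal : ∀ z ∈ ((Δ ^ 2 - 1).map (algebraMap ℝ ℂ)).roots, z.im = 0) :
    ¬ (Δ ^ 2 - 1).IsRoot 0 ∧
    Even (Multiset.card ((Δ ^ 2 - 1).roots.filter fun x => 0 < x)) ∧
    Even (Multiset.card ((Δ ^ 2 - 1).roots.filter fun x => x < 0)) := by
  set P : Polynomial ℝ := Δ ^ 2 - 1 with hP
  -- evaluation at 0 is positive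
  have heval0 : 0 < P.eval 0 := by
    simp only [hP, eval_sub, eval_pow, eval_one]
    nlinarith
  have hnotroot : ¬ P.IsRoot 0 := by
    intro h
    rw [IsRoot] at h
    linarith
  -- degree facts
  have hΔne : Δ ≠ 0 := by
    intro h
    rw [h] at hdeg
    simp at hdeg
  have hnd : 0 < Δ.natDegree :=
    natDegree_pos_iff_degree_pos.mpr (lt_of_lt_of_le (by norm_num) hdeg)
  have hdeg2 : degree (Δ ^ 2) = ((2 * Δ.natDegree : ℕ) : WithBot ℕ) := by
    rw [degree_eq_natDegree (pow_ne_zero 2 hΔne), natDegree_pow]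
  have hdegpow : degree (1 : Polynomial ℝ) < degree (Δ ^ 2) := by
    rw [degree_one, hdeg2]
    norm_cast
    omega
  have hdegP : P.degree = degree (Δ ^ 2) := degree_sub_eq_left_of_degree_lt hdegpow
  have hPne : P ≠ 0 := fun h => by
    rw [h] at heval0; simp at heval0
  have hnatP : P.natDegree = 2 * Δ.natDegree := by
    have := natDegree_eq_of_degree_eq hdegP
    rwa [natDegree_pow] at this
  have hlc : 0 < P.leadingCoeff := by
    have h1 : P.leadingCoeff = (Δ ^ 2).leadingCoeff :=
      leadingCoeff_sub_of_degree_lt hdegpow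
    rw [h1, leadingCoeff_pow]
    exact pow_two_pos_of_ne_zero (leadingCoeff_ne_zero.mpr hΔne)
  -- no root is zero
  have hzero : ∀ r ∈ P.roots, r ≠ 0 := by
    intro r hr h
    exact hnotroot (h ▸ (isRoot_of_mem_roots hr))
  -- complex roots are the images of real roots
  set Q : Polynomial ℂ := P.map (algebraMap ℝ ℂ) with hQ
  have hQne : Q ≠ 0 := (Polynomial.map_ne_zero_iff (algebraMap ℝ ℂ).injective).mpr hPne
  have hroots_eq : P.roots.map (fun r : ℝ => (r : ℂ)) = Q.roots := by
    refine Multiset.ext.mpr fun z => ?_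
    by_cases hz : z.im = 0
    · have hzz : z = ((z.re : ℝ) : ℂ) := by
        apply Complex.ext <;> simp [hz]
      rw [hzz, Multiset.count_map_eq_count' _ _ Complex.ofReal_injective,
        count_roots, count_roots, hQ,
        ← Complex.coe_algebraMap,
        eq_rootMultiplicity_map (algebraMap ℝ ℂ).injective]
    · have h1 : z ∉ Q.roots := fun h => hz (hreal z h)
      have h2 : z ∉ P.roots.map (fun r : ℝ => (r : ℂ)) := by
        intro h
        obtain ⟨r, _, hr⟩ := Multiset.mem_map.mp h
        exact hz (by rw [← hr]; simp)
      rw [Multiset.count_eq_zero.mpr h1, Multiset.count_eq_zero.mpr h2]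
  -- card of real roots = natDegree
  have hcard : Multiset.card P.roots = P.natDegree := by
    have h1 : Multiset.card Q.roots = Q.natDegree :=
      splits_iff_card_roots.mp (IsAlgClosed.splits Q)
    have h2 : Q.natDegree = P.natDegree := natDegree_map _
    rw [← hroots_eq, Multiset.card_map] at h1
    rw [h1, h2]
  -- P splits, product formula
  have hsplit : P = C P.leadingCoeff * (P.roots.map fun a => X - C a).prod :=
    (C_leadingCoeff_mul_prod_multiset_X_sub_C hcard).symm
  have hevalprod : P.eval 0 = P.leadingCoeff * (P.roots.map fun a => -a).prod := by
    conv_lhs => rw [hsplit]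
    rw [eval_mul, eval_C, eval_multiset_prod, Multiset.map_map]
    congr 1
    congr 1
    apply Multiset.map_congr rfl
    intro r _
    simp
  -- split the product over positive / nonpositive roots
  set t : Multiset ℝ := P.roots.map fun a => -a with ht
  have hsplit_t : t.filter (fun x => 0 < x) + t.filter (fun x => ¬ 0 < x) = t :=
    Multiset.filter_add_not _ _
  have hprod_t : t.prod = (t.filter (fun x => ¬ 0 < x)).prod *
      (t.filter (fun x => 0 < x)).prod := by
    rw [← Multiset.prod_add, add_comm, hsplit_t]
  have hBpos : 0 < (t.filter (fun x => 0 < x)).prod :=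
    Multiset.prod_pos fun x hx => (Multiset.mem_filter.mp hx).2
  have hAneg : ∀ x ∈ t.filter (fun x => ¬ 0 < x), x < 0 := by
    intro x hx
    obtain ⟨hxt, hxnp⟩ := Multiset.mem_filter.mp hx
    obtain ⟨r, hr, hrx⟩ := Multiset.mem_map.mp hxt
    have : x ≠ 0 := by
      rw [← hrx]
      simpa using hzero r hr
    exact lt_of_le_of_ne (not_lt.mp hxnp) this
  have hApos : 0 < (t.filter (fun x => ¬ 0 < x)).prod := by
    have h := heval0
    rw [hevalprod, hprod_t] at h
    nlinarith [mul_pos hlc hBpos]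
  have hAcard : Even (Multiset.card (t.filter fun x => ¬ 0 < x)) :=
    (aux_neg_prod _ hAneg).mp hApos
  -- the nonpositive elements of t correspond to positive roots
  have hfilter1 : t.filter (fun x => ¬ 0 < x) =
      (P.roots.filter fun r => 0 < r).map fun a => -a := by
    rw [ht, Multiset.filter_map]
    congr 1
    apply Multiset.filter_congr
    intro r hr
    constructor
    · intro h
      have hne := hzero r hr
      simp only [Function.comp, not_lt, neg_nonpos] at h
      exact lt_of_le_of_ne (by linarith [h]) (Ne.symm hne) |>.le.lt_of_ne (Ne.symm hne)
    · intro h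
      simp [Function.comp, not_lt]
      linarith
  have hposEven : Even (Multiset.card (P.roots.filter fun x => 0 < x)) := by
    rw [hfilter1, Multiset.card_map] at hAcard
    exact hAcard
  refine ⟨hnotroot, hposEven, ?_⟩
  -- negative roots: total is even
  have hfilter2 : P.roots.filter (fun x => ¬ 0 < x) = P.roots.filter fun x => x < 0 := by
    apply Multiset.filter_congr
    intro r hr
    have := hzero r hr
    constructor
    · intro h; exact lt_of_le_of_ne (not_lt.mp h) this
    · intro h; exact not_lt.mpr h.le
  have hsum : Multiset.card (P.roots.filter fun x => 0 < x) +
      Multiset.card (P.roots.filter fun x => x < 0) = Multiset.card P.roots := by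
    rw [← hfilter2, ← Multiset.card_add, Multiset.filter_add_not]
  have htotal : Even (Multiset.card P.roots) := by
    rw [hcard, hnatP]; exact even_two_mul _
  rw [← hsum] at htotal
  exact (Nat.even_add.mp htotal).mp hposEven
end

section
/- The Riccati-type function Λ(x) = (g'(x)/g(x))·cosh²((x-a)/2) - (1/2)·sinh((x-a)/2)·cosh((x-a)/2), where g is a nonvanishing solution of -g'' + g/4 = 0 on an interval, satisfies Λ'(x) = -Λ(x)²·cosh((x-a)/2)⁻² on that interval. -/
/-- The Riccati-type function
`Λ(x) = (g'(x)/g(x)) cosh²((x-a)/2) - (1/2) sinh((x-a)/2) cosh((x-a)/2)`,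
where `g` is a nonvanishing solution of `-g'' + g/4 = 0` on an open interval,
satisfies `Λ' = -Λ² cosh((x-a)/2)⁻²` on that interval. -/
theorem stmt_14 (a : ℝ) (I : Set ℝ) (hI : IsOpen I) (g g' : ℝ → ℝ)
    (hg : ∀ x ∈ I, HasDerivAt g (g' x) x)
    (hg' : ∀ x ∈ I, HasDerivAt g' (g x / 4) x)
    (hgne : ∀ x ∈ I, g x ≠ 0) :
    let Λ : ℝ → ℝ := fun x =>
      g' x / g x * Real.cosh ((x - a) / 2) ^ 2 -
        1 / 2 * Real.sinh ((x - a) / 2) * Real.cosh ((x - a) / 2)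
    ∀ x ∈ I, HasDerivAt Λ (-(Λ x) ^ 2 * (Real.cosh ((x - a) / 2))⁻¹ ^ 2) x := by
  intro Λ x hx
  have hgx := hg x hx
  have hg'x := hg' x hx
  have hne := hgne x hx
  have hlin : HasDerivAt (fun x : ℝ => (x - a) / 2) (1 / 2) x := by
    simpa using ((hasDerivAt_id x).sub_const a).div_const 2
  have hc : HasDerivAt (fun x : ℝ => Real.cosh ((x - a) / 2))
      (Real.sinh ((x - a) / 2) * (1 / 2)) x := hlin.cosh
  have hs : HasDerivAt (fun x : ℝ => Real.sinh ((x - a) / 2))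
      (Real.cosh ((x - a) / 2) * (1 / 2)) x := hlin.sinh
  have hq : HasDerivAt (fun x : ℝ => g' x / g x)
      ((g x / 4 * g x - g' x * g' x) / (g x) ^ 2) x := hg'x.div hgx hne
  have hc2 : HasDerivAt (fun x : ℝ => Real.cosh ((x - a) / 2) ^ 2)
      (2 * Real.cosh ((x - a) / 2) ^ 1 * (Real.sinh ((x - a) / 2) * (1 / 2))) x :=
    hc.pow 2
  have h1 := (hq.mul hc2).sub (((hs.const_mul (1 / 2 : ℝ)).mul hc))
  refine h1.congr_deriv (Eq.symm ?_)
  have hid := Real.cosh_sq_sub_sinh_sq ((x - a) / 2)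
  have hcne : Real.cosh ((x - a) / 2) ≠ 0 := (Real.cosh_pos _).ne'
  show -(g' x / g x * Real.cosh ((x - a) / 2) ^ 2 -
        1 / 2 * Real.sinh ((x - a) / 2) * Real.cosh ((x - a) / 2)) ^ 2 *
      (Real.cosh ((x - a) / 2))⁻¹ ^ 2 = _
  field_simp
  nlinarith [sq_nonneg (g x), sq_nonneg (Real.cosh ((x-a)/2)), hid]
end
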